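/- Let (ΛV, d) be the free graded commutative DGA over ℝ on generators a, b of degree 2 and x, y, z of degree 3, with differential da = db = 0, dx = a², dy = b², dz = e·(a·b) for a nonzero integer e. Then the element ν = a·z − x·b is closed but not exact; consequently the triple Massey product ⟨[a],[a],[b]⟩ is defined and does not contain 0. -/

import Mathlib

/-- Let `(ΛV, d)` be the free graded-commutative DGA on generators `a, b` of
degree 2 and `x, y, z` of degree 3 with `da = db = 0`, `dx = a²`, `dy = b²`, `dz = e·(a·b)`,
`e ≠ 0` (the freeness in the relevant degrees is axiomatized by the span and linear
independence hypotheses below, which hold in the free algebra).  Then `ν = a·z − e·(x·b)` is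
closed but not exact; consequently the triple Massey product `⟨[a],[a],[b]⟩` is defined and
does not contain `0`. -/
theorem statement7 {A : Type*} [Ring A] [Algebra ℝ A] (𝒜 : ℕ → Submodule ℝ A)
    [GradedAlgebra 𝒜] (d : A →ₗ[ℝ] A)
    (hd2 : ∀ v, d (d v) = 0)
    (hdeg : ∀ i, ∀ v ∈ 𝒜 i, d v ∈ 𝒜 (i + 1))
    (hLeib : ∀ i, ∀ u ∈ 𝒜 i, ∀ v : A, d (u * v) = d u * v + ((-1 : ℝ) ^ i) • (u * d v))
    (hcomm : ∀ i j, ∀ u ∈ 𝒜 i, ∀ v ∈ 𝒜 j, u * v = ((-1 : ℝ) ^ (i * j)) • (v * u))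
    (e : ℤ) (he : e ≠ 0)
    (a b x y z : A)
    (ha : a ∈ 𝒜 2) (hb : b ∈ 𝒜 2) (hx : x ∈ 𝒜 3) (hy : y ∈ 𝒜 3) (hz : z ∈ 𝒜 3)
    (hda : d a = 0) (hdb : d b = 0)
    (hdx : d x = a * a) (hdy : d y = b * b) (hdz : d z = (e : ℝ) • (a * b))
    -- freeness of `ΛV` in degrees 3, 4 and 5:
    (h3 : 𝒜 3 = Submodule.span ℝ {x, y, z})
    (h4 : 𝒜 4 = Submodule.span ℝ {a * a, a * b, b * b})
    (hli4 : LinearIndependent ℝ ![a * a, a * b, b * b])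
    (hli5 : LinearIndependent ℝ ![a * z, x * b]) :
    d (a * z - (e : ℝ) • (x * b)) = 0 ∧
    (¬ ∃ w : A, d w = a * z - (e : ℝ) • (x * b)) ∧
    (∃ a12 ∈ 𝒜 3, ∃ a23 ∈ 𝒜 3, d a12 = a * a ∧ d a23 = a * b) ∧
    (∀ a12 a23 : A, a12 ∈ 𝒜 3 → a23 ∈ 𝒜 3 → d a12 = a * a → d a23 = a * b →
      ¬ ∃ h1 h2 w : A, h1 ∈ 𝒜 3 ∧ h2 ∈ 𝒜 3 ∧ d h1 = 0 ∧ d h2 = 0 ∧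
        a * a23 - a12 * b = a * h1 + h2 * b + d w) := by
  have hE : (e : ℝ) ≠ 0 := Int.cast_ne_zero.mpr he
  -- derivatives of the degree 4 generators vanish
  have hdaa : d (a * a) = 0 := by
    rw [hLeib 2 a ha a, hda]; simp [hda]
  have hdab : d (a * b) = 0 := by
    rw [hLeib 2 a ha b, hda]; simp [hdb]
  have hdbb : d (b * b) = 0 := by
    rw [hLeib 2 b hb b, hdb]; simp [hdb]
  -- d vanishes on 𝒜 4
  have hd4 : ∀ v ∈ 𝒜 4, d v = 0 := by
    intro v hv
    rw [h4] at hv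
    have hle : Submodule.span ℝ {a * a, a * b, b * b} ≤ LinearMap.ker d := by
      rw [Submodule.span_le]
      intro u hu
      simp only [Set.mem_insert_iff, Set.mem_singleton_iff] at hu
      rcases hu with rfl | rfl | rfl <;> simpa [LinearMap.mem_ker]
    exact hle hv
  -- closedness of ν
  have hclosed : d (a * z - (e : ℝ) • (x * b)) = 0 := by
    rw [map_sub, map_smul, hLeib 2 a ha z, hLeib 3 x hx b, hda, hdb, hdx, hdz]
    simp [mul_smul_comm, mul_assoc]
  -- ν ≠ 0
  have hne : a * z - (e : ℝ) • (x * b) ≠ 0 := by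
    intro h0
    have h := Fintype.linearIndependent_iff.mp hli5 ![1, -(e : ℝ)] (by
      have : (1 : ℝ) • (a * z) + (-(e : ℝ)) • (x * b) = 0 := by
        rw [one_smul, neg_smul, ← sub_eq_add_neg]; exact h0
      simpa [Fin.sum_univ_two] using this) 0
    simpa using h
  -- ν ∈ 𝒜 5
  have hnu5 : a * z - (e : ℝ) • (x * b) ∈ 𝒜 5 := by
    have h1 : a * z ∈ 𝒜 (2 + 3) := SetLike.mul_mem_graded ha hz
    have h2 : x * b ∈ 𝒜 (3 + 2) := SetLike.mul_mem_graded hx hb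
    exact Submodule.sub_mem _ h1 (Submodule.smul_mem _ _ h2)
  -- compatibility of d with the grading decomposition
  have hdecomp : ∀ (n : ℕ) (w : A),
      (DirectSum.decompose 𝒜 (d w) (n + 1) : A) = d (DirectSum.decompose 𝒜 w n : A) := by
    intro n w
    induction w using DirectSum.Decomposition.inductionOn 𝒜 with
    | zero => simp
    | @homogeneous i m =>
        by_cases hin : i = n
        · subst hin
          rw [DirectSum.decompose_of_mem_same 𝒜 m.2,
            DirectSum.decompose_of_mem_same 𝒜 (hdeg i m m.2)]
        · rw [DirectSum.decompose_of_mem_ne 𝒜 m.2 hin,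
            DirectSum.decompose_of_mem_ne 𝒜 (hdeg i m m.2) (by omega), map_zero]
    | add u v hu hv =>
        rw [map_add, DirectSum.decompose_add, DirectSum.decompose_add]
        simp only [DirectSum.add_apply, Submodule.coe_add, map_add, hu, hv]
  -- non-exactness of ν
  have hnotexact : ¬ ∃ w : A, d w = a * z - (e : ℝ) • (x * b) := by
    rintro ⟨w, hw⟩
    have h5 := hdecomp 4 w
    rw [hw, DirectSum.decompose_of_mem_same 𝒜 hnu5] at h5
    exact hne (h5.trans (hd4 _ (SetLike.coe_mem _)))
  refine ⟨hclosed, hnotexact, ⟨x, hx, (e : ℝ)⁻¹ • z, Submodule.smul_mem _ _ hz, hdx, by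
    rw [map_smul, hdz, smul_smul, inv_mul_cancel₀ hE, one_smul]⟩, ?_⟩
  -- classification of elements of 𝒜 3
  have hspan3 : ∀ v ∈ 𝒜 3, ∃ p q r : ℝ, v = p • x + q • y + r • z ∧
      d v = p • (a * a) + (r * e) • (a * b) + q • (b * b) := by
    intro v hv
    rw [h3, show ({x, y, z} : Set A) = insert x (insert y {z}) from rfl] at hv
    obtain ⟨p, v1, hv1, rfl⟩ := Submodule.mem_span_insert.mp hv
    obtain ⟨q, v2, hv2, rfl⟩ := Submodule.mem_span_insert.mp hv1
    obtain ⟨r, rfl⟩ := Submodule.mem_span_singleton.mp hv2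
    refine ⟨p, q, r, by rw [add_assoc], ?_⟩
    rw [map_add, map_add, map_smul, map_smul, map_smul, hdx, hdy, hdz, smul_smul]
    module
  -- coefficient extraction in degree 4
  have hcoef : ∀ c1 c2 c3 : ℝ, c1 • (a * a) + c2 • (a * b) + c3 • (b * b) = 0 →
      c1 = 0 ∧ c2 = 0 ∧ c3 = 0 := by
    intro c1 c2 c3 hsum
    have h := Fintype.linearIndependent_iff.mp hli4 ![c1, c2, c3] (by
      simpa [Fin.sum_univ_three] using hsum)
    exact ⟨h 0, h 1, h 2⟩
  rintro a12 a23 h12 h23 hd12 hd23 ⟨h1, h2, w, hh1, hh2, hdh1, hdh2, heq⟩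
  -- a12 = x
  obtain ⟨p1, q1, r1, ha12, hda12⟩ := hspan3 a12 h12
  rw [hd12] at hda12
  obtain ⟨hp1, hr1, hq1⟩ := hcoef (p1 - 1) (r1 * e) q1 (by
    have : p1 • (a * a) + (r1 * e) • (a * b) + q1 • (b * b) = a * a := hda12.symm
    linear_combination (norm := module) this)
  have hp1' : p1 = 1 := by linarith
  have hr1' : r1 = 0 := by
    rcases mul_eq_zero.mp hr1 with h | h
    · exact h
    · exact absurd h hE
  have ha12' : a12 = x := by rw [ha12, hp1', hr1', hq1]; simp
  -- a23 = e⁻¹ • z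
  obtain ⟨p2, q2, r2, ha23, hda23⟩ := hspan3 a23 h23
  rw [hd23] at hda23
  obtain ⟨hp2, hr2, hq2⟩ := hcoef p2 (r2 * e - 1) q2 (by
    have : p2 • (a * a) + (r2 * e) • (a * b) + q2 • (b * b) = a * b := hda23.symm
    linear_combination (norm := module) this)
  have hr2' : r2 = (e : ℝ)⁻¹ := by
    field_simp
    linarith
  have ha23' : a23 = (e : ℝ)⁻¹ • z := by rw [ha23, hp2, hr2', hq2]; simp
  -- h1 = 0 and h2 = 0
  have hzero3 : ∀ v ∈ 𝒜 3, d v = 0 → v = 0 := by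
    intro v hv hdv
    obtain ⟨p, q, r, hveq, hdveq⟩ := hspan3 v hv
    rw [hdv] at hdveq
    obtain ⟨hp, hr, hq⟩ := hcoef p (r * e) q hdveq.symm
    have hr' : r = 0 := by
      rcases mul_eq_zero.mp hr with h | h
      · exact h
      · exact absurd h hE
    rw [hveq, hp, hq, hr']; simp
  rw [hzero3 h1 hh1 hdh1, hzero3 h2 hh2 hdh2, ha12', ha23'] at heq
  -- derive exactness of ν, contradiction
  apply hnotexact
  refine ⟨(e : ℝ) • w, ?_⟩
  rw [map_smul]
  have hdw : d w = (e : ℝ)⁻¹ • (a * z) - x * b := by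
    rw [← mul_smul_comm]
    simpa using heq.symm
  rw [hdw, smul_sub, smul_smul, mul_inv_cancel₀ hE, one_smul]
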